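/- arXiv:0705.2848 — 2 statements merged into one kernel-verified Lean document; each statement's English description precedes it below -/
import Mathlib

section
/- Let k₁ > 0, N_c > 0, and R > 0. Define f(ρ) = (1/N_c)·ln(1 + k₁ρ/(1+ρ)) − ρR for ρ ≥ 0. Then sup_{ρ≥0} f(ρ) > 0 if and only if R < k₁/N_c. -/
open Set

/-- The random-coding exponent objective has positive supremum over `ρ ≥ 0`
iff the rate is below `R_max = k₁/N_c`. -/
theorem positive_exponent_iff (k1 Nc R : ℝ) (hk1 : 0 < k1) (hNc : 0 < Nc) (hR : 0 < R) :
    0 < sSup ((fun ρ : ℝ => (1 / Nc) * Real.log (1 + k1 * ρ / (1 + ρ)) - ρ * R) '' Ici 0)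
      ↔ R < k1 / Nc := by
  set f : ℝ → ℝ := fun ρ : ℝ => (1 / Nc) * Real.log (1 + k1 * ρ / (1 + ρ)) - ρ * R with hf
  have hbdd : BddAbove (f '' Ici 0) := by
    refine ⟨(1 / Nc) * Real.log (1 + k1), ?_⟩
    rintro y ⟨ρ, hρ, rfl⟩
    have hρ0 : (0:ℝ) ≤ ρ := hρ
    have h1ρ : (0:ℝ) < 1 + ρ := by linarith
    have ht0 : 0 ≤ k1 * ρ / (1 + ρ) := by positivity
    have htk : k1 * ρ / (1 + ρ) ≤ k1 := by
      rw [div_le_iff₀ h1ρ]; nlinarith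
    have hlog : Real.log (1 + k1 * ρ / (1 + ρ)) ≤ Real.log (1 + k1) :=
      Real.log_le_log (by linarith) (by linarith)
    have hNc' : 0 < 1 / Nc := by positivity
    have : (1 / Nc) * Real.log (1 + k1 * ρ / (1 + ρ)) ≤ (1 / Nc) * Real.log (1 + k1) :=
      mul_le_mul_of_nonneg_left hlog (le_of_lt hNc')
    have hρR : 0 ≤ ρ * R := mul_nonneg hρ0 (le_of_lt hR)
    simp only [hf]; linarith
  have hne : (f '' Ici 0).Nonempty := ⟨f 0, ⟨0, mem_Ici.mpr le_rfl, rfl⟩⟩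
  constructor
  · intro h
    by_contra hcon
    push_neg at hcon
    have hle : sSup (f '' Ici 0) ≤ 0 := by
      apply csSup_le hne
      rintro y ⟨ρ, hρ, rfl⟩
      have hρ0 : (0:ℝ) ≤ ρ := hρ
      have h1ρ : (0:ℝ) < 1 + ρ := by linarith
      have ht0 : 0 ≤ k1 * ρ / (1 + ρ) := by positivity
      have hlog : Real.log (1 + k1 * ρ / (1 + ρ)) ≤ k1 * ρ / (1 + ρ) := by
        have := Real.log_le_sub_one_of_pos (x := 1 + k1 * ρ / (1 + ρ)) (by linarith)
        linarith
      have htk : k1 * ρ / (1 + ρ) ≤ k1 * ρ :=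
        div_le_self (by positivity) (by linarith)
      have hNc' : 0 < 1 / Nc := by positivity
      have h2 : (1 / Nc) * Real.log (1 + k1 * ρ / (1 + ρ)) ≤ (1 / Nc) * (k1 * ρ) := by
        apply mul_le_mul_of_nonneg_left _ (le_of_lt hNc')
        linarith
      have h3 : (1 / Nc) * (k1 * ρ) ≤ ρ * R := by
        have hkR : k1 / Nc ≤ R := hcon
        have := mul_le_mul_of_nonneg_left hkR hρ0
        calc (1 / Nc) * (k1 * ρ) = ρ * (k1 / Nc) := by ring
          _ ≤ ρ * R := this
      simp only [hf]; linarith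
    linarith
  · intro hRlt
    -- derivative of f at 0 is k1/Nc - R > 0
    have hderiv : HasDerivAt f (k1 / Nc - R) 0 := by
      have h1 : HasDerivAt (fun ρ : ℝ => ρ) 1 0 := hasDerivAt_id 0
      have h2 : HasDerivAt (fun ρ : ℝ => 1 + ρ) 1 0 := by
        simpa using h1.const_add (1:ℝ)
      have h3 : HasDerivAt (fun ρ : ℝ => k1 * ρ) k1 0 := by
        simpa using h1.const_mul k1
      have h4 : HasDerivAt (fun ρ : ℝ => k1 * ρ / (1 + ρ)) k1 0 := by
        have := h3.div h2 (by norm_num)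
        simpa [Pi.div_def] using this
      have h5 : HasDerivAt (fun ρ : ℝ => 1 + k1 * ρ / (1 + ρ)) k1 0 := h4.const_add 1
      have h6 : HasDerivAt (fun ρ : ℝ => Real.log (1 + k1 * ρ / (1 + ρ))) k1 0 := by
        have := h5.log (by norm_num)
        simpa using this
      have h7 := (h6.const_mul (1 / Nc)).sub (h1.mul_const R)
      have : (1 / Nc) * k1 - 1 * R = k1 / Nc - R := by ring
      rw [hf]
      have h8 : (1:ℝ)/Nc = Nc⁻¹ := one_div Nc
      have h9 : k1/Nc - R = Nc⁻¹ * k1 - R := by field_simp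
      rw [h9]
      simpa [one_div, Pi.sub_def] using h7
    have hpos : 0 < k1 / Nc - R := by linarith
    have hslope := hasDerivAt_iff_tendsto_slope.mp hderiv
    have hslope' : Filter.Tendsto (slope f 0) (nhdsWithin 0 (Ioi 0)) (nhds (k1 / Nc - R)) :=
      hslope.mono_left (nhdsWithin_mono 0 (fun x hx => ne_of_gt hx))
    have hev : ∀ᶠ x in nhdsWithin 0 (Ioi 0), 0 < slope f 0 x :=
      hslope' (Ioi_mem_nhds hpos)
    obtain ⟨x, hx, hxpos⟩ := (hev.and self_mem_nhdsWithin).exists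
    have hf0 : f 0 = 0 := by simp [hf]
    have hslx : slope f 0 x = f x / x := by
      simp [slope, hf0, div_eq_inv_mul]
    have hfx : 0 < f x := by
      rw [hslx] at hx
      have hx0 : (0:ℝ) < x := hxpos
      by_contra hle
      push_neg at hle
      have : f x / x ≤ 0 := div_nonpos_of_nonpos_of_nonneg hle (le_of_lt hx0)
      linarith
    have hmem : f x ∈ f '' Ici 0 := ⟨x, le_of_lt hxpos, rfl⟩
    calc (0:ℝ) < f x := hfx
      _ ≤ sSup (f '' Ici 0) := le_csSup hbdd hmem
end

section
/- Let s > 0 (the per-coherence-subspace SNR, s = N_c·SNR) and N_c > 2. Define K(η) = η(1−η)s² / ((N_c−1)(1 + ηs) + (1−η)s) for η ∈ [0,1]. Then K is maximized over [0,1] at η* = ((s + N_c − 1)/((N_c−2)s)) · (√(1 + (N_c−2)s/(s + N_c − 1)) − 1), and η* ∈ (0,1). -/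
open Set

/-- The optimal training-energy fraction for MMSE channel estimation. -/
theorem optimal_training_fraction (s Nc : ℝ) (hs : 0 < s) (hNc : 2 < Nc) :
    let K : ℝ → ℝ := fun η => η * (1 - η) * s ^ 2 /
      ((Nc - 1) * (1 + η * s) + (1 - η) * s)
    let ηs : ℝ := (s + Nc - 1) / ((Nc - 2) * s) *
      (Real.sqrt (1 + (Nc - 2) * s / (s + Nc - 1)) - 1)
    ηs ∈ Ioo (0:ℝ) 1 ∧ ∀ η ∈ Icc (0:ℝ) 1, K η ≤ K ηs := by
  intro K ηs
  have hc : (0:ℝ) < s + Nc - 1 := by linarith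
  have ht : (0:ℝ) < (Nc - 2) * s := by
    have : (0:ℝ) < Nc - 2 := by linarith
    positivity
  set r := Real.sqrt (1 + (Nc - 2) * s / (s + Nc - 1)) with hr_def
  have harg : (0:ℝ) ≤ 1 + (Nc - 2) * s / (s + Nc - 1) := by
    have := div_pos ht hc; linarith
  have hr2 : r ^ 2 = 1 + (Nc - 2) * s / (s + Nc - 1) := Real.sq_sqrt harg
  have hr1 : 1 < r := by
    have h1 : (1:ℝ) < 1 + (Nc - 2) * s / (s + Nc - 1) := by
      have := div_pos ht hc; linarith
    nlinarith [Real.sqrt_nonneg (1 + (Nc - 2) * s / (s + Nc - 1)), hr2]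
  have hrt : (Nc - 2) * s = (s + Nc - 1) * (r + 1) * (r - 1) := by
    field_simp at hr2
    linarith [hr2]
  have hηs : ηs = 1 / (r + 1) := by
    have h1 : ηs = (s + Nc - 1) / ((Nc - 2) * s) * (r - 1) := rfl
    rw [h1, hrt]
    have hr1' : r - 1 ≠ 0 := by linarith
    have hr2' : r + 1 ≠ 0 := by linarith
    field_simp
  have h0 : 0 < ηs := by rw [hηs]; positivity
  have h1' : ηs < 1 := by
    rw [hηs, div_lt_one (by linarith)]; linarith
  have hq : (Nc - 2) * s * ηs ^ 2 + 2 * (s + Nc - 1) * ηs - (s + Nc - 1) = 0 := by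
    rw [hηs, hrt]
    have hr2' : r + 1 ≠ 0 := by linarith
    field_simp
    ring
  refine ⟨⟨h0, h1'⟩, ?_⟩
  intro η hη
  obtain ⟨hη0, hη1⟩ := hη
  have hDpos : ∀ x : ℝ, 0 ≤ x → 0 < (Nc - 1) * (1 + x * s) + (1 - x) * s := by
    intro x hx
    have h : (Nc - 1) * (1 + x * s) + (1 - x) * s = (s + Nc - 1) + (Nc - 2) * s * x := by
      ring
    rw [h]
    nlinarith [mul_nonneg ht.le hx]
  show η * (1 - η) * s ^ 2 / ((Nc - 1) * (1 + η * s) + (1 - η) * s) ≤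
      ηs * (1 - ηs) * s ^ 2 / ((Nc - 1) * (1 + ηs * s) + (1 - ηs) * s)
  rw [div_le_div_iff₀ (hDpos η hη0) (hDpos ηs h0.le)]
  have hq2 : s ^ 2 * (ηs - η) *
      ((Nc - 2) * s * ηs ^ 2 + 2 * (s + Nc - 1) * ηs - (s + Nc - 1)) = 0 := by
    rw [hq]; ring
  have hsq : 0 ≤ s ^ 2 * (ηs - η) ^ 2 * ((Nc - 2) * s * ηs + (s + Nc - 1)) := by
    have : 0 ≤ (Nc - 2) * s * ηs + (s + Nc - 1) := by
      nlinarith [mul_nonneg ht.le h0.le]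
    positivity
  nlinarith [hq2, hsq]
end
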